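/- Let r₁, r₂, b > 0 with |r₁ − r₂| < b < r₁ + r₂. Set x₁ = (r₂² − r₁² − b²)/(2b), x₂ = b + x₁, ρ = √(r₁² − x₁²), α₁ = arccos(−x₁/r₁), α₂ = arccos(x₂/r₂). Then the area of the intersection of the two closed disks {x² + y² ≤ r₁²} and {(x+b)² + y² ≤ r₂²} equals α₂·r₂² + α₁·r₁² − ρ·b. -/

import Mathlib

open Real MeasureTheory

lemma sqrt_antideriv (r : ℝ) (hr : 0 < r) {x : ℝ} (hx : x ∈ Set.Ioo (-r) r) :
    HasDerivAt (fun x => x * Real.sqrt (r^2 - x^2) + r^2 * Real.arcsin (x/r))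
      (2 * Real.sqrt (r^2 - x^2)) x := by
  obtain ⟨hx1, hx2⟩ := hx
  have hpos : 0 < r^2 - x^2 := by nlinarith
  have hs : 0 < Real.sqrt (r^2 - x^2) := Real.sqrt_pos.mpr hpos
  have hsq : Real.sqrt (r^2 - x^2) ^ 2 = r^2 - x^2 := Real.sq_sqrt hpos.le
  have hinner : HasDerivAt (fun x : ℝ => r^2 - x^2) (-(2*x)) x := by
    have := ((hasDerivAt_pow 2 x).const_sub (r^2))
    simpa using this
  have h2 : HasDerivAt (fun x => Real.sqrt (r^2 - x^2))
      (1 / (2 * Real.sqrt (r^2 - x^2)) * (-(2*x))) x :=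
    (Real.hasDerivAt_sqrt hpos.ne').comp x hinner
  have h3 : HasDerivAt (fun x => x * Real.sqrt (r^2 - x^2))
      (1 * Real.sqrt (r^2 - x^2) + x * (1 / (2 * Real.sqrt (r^2 - x^2)) * (-(2*x)))) x :=
    (hasDerivAt_id x).mul h2
  have hne1 : x / r ≠ -1 := by
    intro h; rw [div_eq_iff hr.ne'] at h; nlinarith
  have hne2 : x / r ≠ 1 := by
    intro h; rw [div_eq_iff hr.ne'] at h; nlinarith
  have h4 : HasDerivAt (fun x => Real.arcsin (x/r))
      (1 / Real.sqrt (1 - (x/r)^2) * (1/r)) x :=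
    (Real.hasDerivAt_arcsin hne1 hne2).comp (h := fun x => x / r) x ((hasDerivAt_id x).div_const r)
  have hkey : Real.sqrt (1 - (x/r)^2) = Real.sqrt (r^2 - x^2) / r := by
    have h : 1 - (x/r)^2 = (r^2-x^2)/r^2 := by field_simp
    rw [h, Real.sqrt_div hpos.le, Real.sqrt_sq hr.le]
  have := h3.add ((h4.const_mul (r^2)))
  refine this.congr_deriv ?_; symm
  rw [hkey]
  field_simp
  linear_combination hsq

lemma sqrt_integral (r a t : ℝ) (hr : 0 < r) (har : -r ≤ a) (hat : a ≤ t) (htr : t ≤ r) :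
    ∫ x in a..t, 2 * Real.sqrt (r^2 - x^2)
      = (t * Real.sqrt (r^2 - t^2) + r^2 * Real.arcsin (t/r))
        - (a * Real.sqrt (r^2 - a^2) + r^2 * Real.arcsin (a/r)) := by
  apply intervalIntegral.integral_eq_sub_of_hasDeriv_right_of_le hat
  · apply Continuous.continuousOn
    have : Continuous fun x : ℝ => Real.sqrt (r^2 - x^2) :=
      Real.continuous_sqrt.comp (by continuity)
    exact (continuous_id.mul this).add
      (continuous_const.mul (Real.continuous_arcsin.comp (continuous_id.div_const r)))
  · intro x hx
    exact (sqrt_antideriv r hr ⟨lt_of_le_of_lt har hx.1, lt_of_lt_of_le hx.2 htr⟩).hasDerivWithinAt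
  · exact (continuous_const.mul (Real.continuous_sqrt.comp (by continuity))).intervalIntegrable a t

theorem two_disks_intersection_area (r₁ r₂ b : ℝ) (hr₁ : 0 < r₁) (hr₂ : 0 < r₂) (hb : 0 < b)
    (h₁ : |r₁ - r₂| < b) (h₂ : b < r₁ + r₂) :
    volume {p : ℝ × ℝ | p.1 ^ 2 + p.2 ^ 2 ≤ r₁ ^ 2 ∧ (p.1 + b) ^ 2 + p.2 ^ 2 ≤ r₂ ^ 2} =
      ENNReal.ofReal
        (Real.arccos ((b + (r₂ ^ 2 - r₁ ^ 2 - b ^ 2) / (2 * b)) / r₂) * r₂ ^ 2 +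
         Real.arccos (-((r₂ ^ 2 - r₁ ^ 2 - b ^ 2) / (2 * b)) / r₁) * r₁ ^ 2 -
         Real.sqrt (r₁ ^ 2 - ((r₂ ^ 2 - r₁ ^ 2 - b ^ 2) / (2 * b)) ^ 2) * b) := by
  obtain ⟨h1a, h1b⟩ := abs_lt.mp h₁
  set x₁ : ℝ := (r₂ ^ 2 - r₁ ^ 2 - b ^ 2) / (2 * b) with hx₁
  have hb2 : (0:ℝ) < 2 * b := by linarith
  have hI1 : -r₁ < x₁ := by
    rw [hx₁, lt_div_iff₀ hb2]; nlinarith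
  have hI2 : x₁ < r₁ := by
    rw [hx₁, div_lt_iff₀ hb2]; nlinarith
  have hI3 : -r₂ < b + x₁ := by
    have h := (lt_div_iff₀ hb2).mpr (show (-r₂ - b) * (2*b) < r₂^2 - r₁^2 - b^2 by nlinarith)
    linarith [hx₁ ▸ h]
  have hI4 : b + x₁ < r₂ := by
    have h := (div_lt_iff₀ hb2).mpr (show r₂^2 - r₁^2 - b^2 < (r₂ - b) * (2*b) by nlinarith)
    linarith [hx₁ ▸ h]
  have hI5 : x₁ ≤ r₂ - b := by linarith
  have hI6 : -r₁ ≤ r₂ - b := by linarith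
  set f : ℝ → ℝ := fun x => Real.sqrt (min (r₁^2 - x^2) (r₂^2 - (x+b)^2)) with hf
  have hfc : Continuous f := Real.continuous_sqrt.comp (by continuity)
  have hS : MeasurableSet {p : ℝ × ℝ | p.1 ^ 2 + p.2 ^ 2 ≤ r₁ ^ 2 ∧ (p.1 + b) ^ 2 + p.2 ^ 2 ≤ r₂ ^ 2} := by
    apply MeasurableSet.inter
    · exact measurableSet_le ((continuous_fst.pow 2).add (continuous_snd.pow 2)).measurable
        measurable_const
    · exact measurableSet_le (((continuous_fst.add continuous_const).pow 2).add
        (continuous_snd.pow 2)).measurable measurable_const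
  have hvol_slice : ∀ x : ℝ,
      volume {y : ℝ | x ^ 2 + y ^ 2 ≤ r₁ ^ 2 ∧ (x + b) ^ 2 + y ^ 2 ≤ r₂ ^ 2}
        = ENNReal.ofReal (2 * f x) := by
    intro x
    have hset : {y : ℝ | x ^ 2 + y ^ 2 ≤ r₁ ^ 2 ∧ (x + b) ^ 2 + y ^ 2 ≤ r₂ ^ 2}
        = {y : ℝ | y^2 ≤ min (r₁^2 - x^2) (r₂^2 - (x+b)^2)} := by
      ext y; simp only [Set.mem_setOf_eq, le_min_iff]
      constructor
      · rintro ⟨h, h'⟩; exact ⟨by linarith, by linarith⟩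
      · rintro ⟨h, h'⟩; exact ⟨by linarith, by linarith⟩
    rw [hset]
    set m := min (r₁^2 - x^2) (r₂^2 - (x+b)^2) with hm
    by_cases hm0 : 0 ≤ m
    · have : {y : ℝ | y^2 ≤ m} = Set.Icc (-(f x)) (f x) := by
        ext y
        simp only [Set.mem_setOf_eq, Set.mem_Icc, ← abs_le]
        constructor
        · intro h
          have := Real.sqrt_le_sqrt h
          rwa [Real.sqrt_sq_eq_abs] at this
        · intro h
          calc y^2 = |y|^2 := (sq_abs y).symm
            _ ≤ (f x)^2 := by
                apply pow_le_pow_left₀ (abs_nonneg y) h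
            _ = m := Real.sq_sqrt hm0
      rw [this, Real.volume_Icc]
      congr 1; ring
    · push_neg at hm0
      have hempty : {y : ℝ | y^2 ≤ m} = ∅ := by
        ext y; simp only [Set.mem_setOf_eq, Set.mem_empty_iff_false, iff_false, not_le]
        calc m < 0 := hm0
          _ ≤ y^2 := sq_nonneg y
      have hf0 : f x = 0 := Real.sqrt_eq_zero'.mpr (le_of_lt hm0)
      rw [hempty, hf0]
      simp
  have hsupp : ∀ x ∉ Set.Icc (-r₁) (r₂ - b), f x = 0 := by
    intro x hx
    simp only [Set.mem_Icc, not_and_or, not_le] at hx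
    apply Real.sqrt_eq_zero'.mpr
    rcases hx with hx | hx
    · exact le_trans (min_le_left _ _) (by nlinarith)
    · exact le_trans (min_le_right _ _) (by nlinarith)
  have hint : Integrable (fun x => 2 * f x) := by
    apply Continuous.integrable_of_hasCompactSupport (by fun_prop)
    exact HasCompactSupport.intro (isCompact_Icc (a := -r₁) (b := r₂ - b))
      fun x hx => by simp [hsupp x hx]
  have hstep1 : volume {p : ℝ × ℝ | p.1 ^ 2 + p.2 ^ 2 ≤ r₁ ^ 2 ∧ (p.1 + b) ^ 2 + p.2 ^ 2 ≤ r₂ ^ 2}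
      = ENNReal.ofReal (∫ x : ℝ, 2 * f x) := by
    rw [MeasureTheory.Measure.volume_eq_prod, MeasureTheory.Measure.prod_apply hS,
      MeasureTheory.ofReal_integral_eq_lintegral_ofReal hint (ae_of_all _ fun x => by positivity)]
    congr 1
    ext x
    have : (Prod.mk x ⁻¹' {p : ℝ × ℝ | p.1 ^ 2 + p.2 ^ 2 ≤ r₁ ^ 2 ∧ (p.1 + b) ^ 2 + p.2 ^ 2 ≤ r₂ ^ 2})
        = {y : ℝ | x ^ 2 + y ^ 2 ≤ r₁ ^ 2 ∧ (x + b) ^ 2 + y ^ 2 ≤ r₂ ^ 2} := rfl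
    rw [this, hvol_slice x]
  rw [hstep1]
  congr 1
  -- now a real-number identity
  have hval : ∫ x : ℝ, 2 * f x = ∫ x in (-r₁)..(r₂ - b), 2 * f x := by
    rw [intervalIntegral.integral_of_le hI6, ← MeasureTheory.integral_Icc_eq_integral_Ioc,
      setIntegral_eq_integral_of_forall_compl_eq_zero (fun x hx => by simp [hsupp x hx])]
  rw [hval]
  have hii1 : IntervalIntegrable (fun x => 2 * f x) volume (-r₁) x₁ :=
    (continuous_const.mul hfc).intervalIntegrable _ _
  have hii2 : IntervalIntegrable (fun x => 2 * f x) volume x₁ (r₂ - b) :=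
    (continuous_const.mul hfc).intervalIntegrable _ _
  rw [← intervalIntegral.integral_add_adjacent_intervals hii1 hii2]
  have hcongr1 : ∫ x in (-r₁)..x₁, 2 * f x = ∫ x in (-r₁)..x₁, 2 * Real.sqrt (r₁^2 - x^2) := by
    apply intervalIntegral.integral_congr
    intro x hx
    rw [Set.uIcc_of_le hI1.le] at hx
    have : min (r₁^2 - x^2) (r₂^2 - (x+b)^2) = r₁^2 - x^2 := by
      apply min_eq_left
      have hxle : x ≤ x₁ := hx.2
      rw [hx₁] at hxle
      rw [le_div_iff₀ hb2] at hxle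
      nlinarith
    simp only [hf, this]
  have hcongr2 : ∫ x in x₁..(r₂ - b), 2 * f x
      = ∫ x in x₁..(r₂ - b), 2 * Real.sqrt (r₂^2 - (x+b)^2) := by
    apply intervalIntegral.integral_congr
    intro x hx
    rw [Set.uIcc_of_le hI5] at hx
    have : min (r₁^2 - x^2) (r₂^2 - (x+b)^2) = r₂^2 - (x+b)^2 := by
      apply min_eq_right
      have hxge : x₁ ≤ x := hx.1
      rw [hx₁] at hxge
      rw [div_le_iff₀ hb2] at hxge
      nlinarith
    simp only [hf, this]
  rw [hcongr1, hcongr2]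
  have hsub : ∫ x in x₁..(r₂ - b), 2 * Real.sqrt (r₂^2 - (x+b)^2)
      = ∫ u in (x₁ + b)..r₂, 2 * Real.sqrt (r₂^2 - u^2) := by
    have := intervalIntegral.integral_comp_add_right (a := x₁) (b := r₂ - b)
      (fun u => 2 * Real.sqrt (r₂^2 - u^2)) b
    rw [this]
    norm_num
  rw [hsub]
  rw [sqrt_integral r₁ (-r₁) x₁ hr₁ le_rfl hI1.le hI2.le,
     sqrt_integral r₂ (x₁ + b) r₂ hr₂ (by linarith) (by linarith) le_rfl]
  have e1 : Real.sqrt (r₁^2 - (-r₁)^2) = 0 := by simp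
  have e2 : Real.arcsin ((-r₁)/r₁) = -(π/2) := by
    rw [neg_div, div_self hr₁.ne', Real.arcsin_neg, Real.arcsin_one]
  have e3 : Real.sqrt (r₂^2 - r₂^2) = 0 := by simp
  have e4 : Real.arcsin (r₂/r₂) = π/2 := by rw [div_self hr₂.ne', Real.arcsin_one]
  have erho : Real.sqrt (r₂^2 - (x₁ + b)^2) = Real.sqrt (r₁^2 - x₁^2) := by
    congr 1
    rw [hx₁]
    field_simp
    ring
  have ea1 : Real.arccos ((b + x₁) / r₂) = π/2 - Real.arcsin ((x₁ + b)/r₂) := by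
    rw [Real.arccos, add_comm b x₁]
  have ea2 : Real.arccos (-x₁ / r₁) = π/2 + Real.arcsin (x₁/r₁) := by
    rw [Real.arccos, neg_div, Real.arcsin_neg]
    ring
  rw [e1, e2, e3, e4, erho, ea1, ea2]
  ring
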